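/- arXiv:1808.06994 — 2 statements merged into one kernel-verified Lean document; each statement's English description precedes it below -/
import Mathlib

section
/- Let U be a real-connected slice-domain in ℍ with U ∩ ℝ ≠ ∅. Then for every q ∈ U and every x ∈ U ∩ ℝ there exists a continuous path γ : [0,1] → ℍ from q to x whose image is contained in U ∩ ℂ_I for some I ∈ 𝕊 (a slice preserving path). -/
noncomputable section

abbrev Hq := Quaternion ℝ

/-- The sphere of imaginary units of the quaternions. -/
def SphereS : Set Hq := {q | q ^ 2 = -1}

/-- The identification of `ℂ` with the slice plane `ℂ_I = ℝ + ℝI`. -/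
def sliceEmb (I : Hq) : ℂ → Hq := fun z => (z.re : Hq) + (z.im : Hq) * I

/-- The slice complex plane `ℂ_I = ℝ + ℝI`. -/
def sliceC (I : Hq) : Set Hq := Set.range (sliceEmb I)

/-- The slice-topology on the quaternions: the quotient topology induced by the
canonical map from the disjoint union of the slices, i.e. the supremum of the
topologies coinduced by the parametrizations of the slices. -/
def sliceTopology : TopologicalSpace Hq :=
  ⨆ I ∈ SphereS, TopologicalSpace.coinduced (sliceEmb I) inferInstance

/-- The real line inside the quaternions. -/
def realLine : Set Hq := Set.range (fun x : ℝ => (x : Hq))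

/-- `g : ℂ → ℍ` (thought of as a function on the slice `ℂ_I`) is (left) holomorphic on
`U`: real differentiable with `∂ₓ g + I ∂_y g = 0`. -/
def SliceHolomorphicOn (I : Hq) (g : ℂ → Hq) (U : Set ℂ) : Prop :=
  ∀ z ∈ U, ∃ L : ℂ →L[ℝ] Hq, HasFDerivAt g L z ∧ L 1 + I * L Complex.I = 0

/-- A function on a slice-open set is slice regular if it is holomorphic on each slice. -/
def SliceRegular (f : Hq → Hq) (Ω : Set Hq) : Prop :=
  ∀ I ∈ SphereS, SliceHolomorphicOn I (f ∘ sliceEmb I) (sliceEmb I ⁻¹' Ω)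

/-- `K(m)` for `K ∈ 𝕊^N` (with `K 0 = 1` by convention) and `1 ≤ m ≤ 2^N`:
`∏_{i=N}^{1} (K_i K_{i-1})^{m_i}` where `(m_N … m_1)₂` is the binary expansion of `m-1`. -/
def zetaTerm (K : ℕ → Hq) (N m : ℕ) : Hq :=
  ((List.range N).reverse.map
    (fun j => (K (j + 1) * K j) ^ (if Nat.testBit (m - 1) j then 1 else 0))).prod

/-- The matrix `σ_N` (0-indexed): entry `(i,j)` is `(-1)^{N+(j+1)}` if
`(i+1)+(j+1) = 2^N + 1`, and `0` otherwise. -/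
def sigmaMat (N : ℕ) : Matrix (Fin (2 ^ N)) (Fin (2 ^ N)) ℝ :=
  Matrix.of fun i j =>
    if (i : ℕ) + (j : ℕ) = 2 ^ N - 1 then (-1 : ℝ) ^ (N + (j : ℕ) + 1) else 0

def QOrth (I J : Hq) : Prop := (I * star J).re = 0

/-! ### Auxiliary lemmas -/

lemma mem_sphereS {I : Hq} (h : I ∈ SphereS) :
    I.re = 0 ∧ I.imI^2 + I.imJ^2 + I.imK^2 = 1 := by
  have h' : I * I = -1 := by rw [← sq]; exact h
  have hre := congrArg QuaternionAlgebra.re h'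
  have h1 := congrArg QuaternionAlgebra.imI h'
  have h2 := congrArg QuaternionAlgebra.imJ h'
  have h3 := congrArg QuaternionAlgebra.imK h'
  simp [Quaternion.re_mul, Quaternion.imI_mul, Quaternion.imJ_mul, Quaternion.imK_mul, Quaternion.re_one, Quaternion.imI_one, Quaternion.imJ_one, Quaternion.imK_one]
    at hre h1 h2 h3
  have hr : I.re = 0 := by
    by_contra hr
    have h1' : I.imI = 0 := by
      have : I.re * I.imI = 0 := by linarith
      exact (mul_eq_zero.1 this).resolve_left hr
    have h2' : I.imJ = 0 := by
      have : I.re * I.imJ = 0 := by linarith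
      exact (mul_eq_zero.1 this).resolve_left hr
    have h3' : I.imK = 0 := by
      have : I.re * I.imK = 0 := by linarith
      exact (mul_eq_zero.1 this).resolve_left hr
    rw [h1', h2', h3'] at hre; nlinarith
  exact ⟨hr, by nlinarith⟩

lemma sphereS_mem_of_comps {a b c : ℝ} (h : a^2 + b^2 + c^2 = 1) :
    (⟨0, a, b, c⟩ : Hq) ∈ SphereS := by
  show (⟨0,a,b,c⟩ : Hq)^2 = -1
  erw [sq]
  ext <;>
    simp [Quaternion.re_mul, Quaternion.imI_mul, Quaternion.imJ_mul, Quaternion.imK_mul] <;>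
    nlinarith

def iu : Hq := ⟨0, 1, 0, 0⟩

lemma iu_mem : iu ∈ SphereS := sphereS_mem_of_comps (by norm_num)

lemma sliceEmb_real (I : Hq) (x : ℝ) : sliceEmb I ((x:ℂ)) = (x : Hq) := by
  simp [sliceEmb]

lemma sliceEmb_neg (I : Hq) (z : ℂ) :
    sliceEmb (-I) z = sliceEmb I ((starRingEnd ℂ) z) := by
  show _ + _ = _ + _
  simp only [Complex.conj_re, Complex.conj_im, Complex.ofReal_neg]
  push_cast [mul_neg, neg_mul]
  rfl

/-- every quaternion lies in some slice -/
lemma exists_slice (q : Hq) : ∃ I ∈ SphereS, ∃ z : ℂ, sliceEmb I z = q := by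
  by_cases h0 : q.imI = 0 ∧ q.imJ = 0 ∧ q.imK = 0
  · refine ⟨iu, iu_mem, (q.re : ℂ), ?_⟩
    rw [sliceEmb_real]
    ext <;> simp [iu, h0.1, h0.2.1, h0.2.2]
  · have hpos : 0 < q.imI^2 + q.imJ^2 + q.imK^2 := by
      rcases not_and_or.1 h0 with h | h
      · positivity
      rcases not_and_or.1 h with h | h <;> positivity
    set r : ℝ := Real.sqrt (q.imI^2 + q.imJ^2 + q.imK^2) with hr
    have hrpos : 0 < r := Real.sqrt_pos.2 hpos
    have hrsq : r^2 = q.imI^2 + q.imJ^2 + q.imK^2 := Real.sq_sqrt hpos.le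
    refine ⟨⟨0, q.imI/r, q.imJ/r, q.imK/r⟩, sphereS_mem_of_comps ?_, ⟨q.re, r⟩, ?_⟩
    · field_simp
      linarith [hrsq]
    · ext <;> simp [sliceEmb, Quaternion.re_mul, Quaternion.imI_mul, Quaternion.imJ_mul,
        Quaternion.imK_mul] <;> (first | erw [Quaternion.re_mul] | erw [Quaternion.imI_mul] | erw [Quaternion.imJ_mul] | erw [Quaternion.imK_mul]) <;> simp <;> field_simp

lemma sliceEmb_comps (I : Hq) (z : ℂ) :
    (sliceEmb I z).re = z.re + z.im * I.re ∧ (sliceEmb I z).imI = z.im * I.imI ∧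
    (sliceEmb I z).imJ = z.im * I.imJ ∧ (sliceEmb I z).imK = z.im * I.imK := by
  refine ⟨?_, ?_, ?_, ?_⟩ <;>
    simp [sliceEmb, Quaternion.re_mul, Quaternion.imI_mul, Quaternion.imJ_mul, Quaternion.imK_mul]

lemma slice_eq_imsq {I J : Hq} (hI : I ∈ SphereS) (hJ : J ∈ SphereS) {z w : ℂ}
    (h : sliceEmb J z = sliceEmb I w) : z.im^2 = w.im^2 := by
  obtain ⟨hIre, hInorm⟩ := mem_sphereS hI
  obtain ⟨hJre, hJnorm⟩ := mem_sphereS hJ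
  obtain ⟨cJr, cJ1, cJ2, cJ3⟩ := sliceEmb_comps J z
  obtain ⟨cIr, cI1, cI2, cI3⟩ := sliceEmb_comps I w
  have e1 : z.im * J.imI = w.im * I.imI := by
    have := congrArg QuaternionAlgebra.imI h; rw [cJ1, cI1] at this; exact this
  have e2 : z.im * J.imJ = w.im * I.imJ := by
    have := congrArg QuaternionAlgebra.imJ h; rw [cJ2, cI2] at this; exact this
  have e3 : z.im * J.imK = w.im * I.imK := by
    have := congrArg QuaternionAlgebra.imK h; rw [cJ3, cI3] at this; exact this
  have q1 : (z.im*J.imI)^2 = (w.im*I.imI)^2 := by rw [e1]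
  have q2 : (z.im*J.imJ)^2 = (w.im*I.imJ)^2 := by rw [e2]
  have q3 : (z.im*J.imK)^2 = (w.im*I.imK)^2 := by rw [e3]
  linear_combination (w.im^2) * hInorm - (z.im^2) * hJnorm + q1 + q2 + q3

lemma slice_eq_classify {I J : Hq} (hI : I ∈ SphereS) (hJ : J ∈ SphereS) {z w : ℂ}
    (h : sliceEmb J z = sliceEmb I w) (hw : w.im ≠ 0) :
    (J = I ∧ z = w) ∨ (J = -I ∧ z = (starRingEnd ℂ) w) := by
  obtain ⟨hIre, hInorm⟩ := mem_sphereS hI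
  obtain ⟨hJre, hJnorm⟩ := mem_sphereS hJ
  obtain ⟨cJr, cJ1, cJ2, cJ3⟩ := sliceEmb_comps J z
  obtain ⟨cIr, cI1, cI2, cI3⟩ := sliceEmb_comps I w
  have hre : z.re = w.re := by
    have := congrArg QuaternionAlgebra.re h; rw [cJr, cIr, hIre, hJre] at this; linarith
  have e1 : z.im * J.imI = w.im * I.imI := by
    have := congrArg QuaternionAlgebra.imI h; rw [cJ1, cI1] at this; exact this
  have e2 : z.im * J.imJ = w.im * I.imJ := by
    have := congrArg QuaternionAlgebra.imJ h; rw [cJ2, cI2] at this; exact this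
  have e3 : z.im * J.imK = w.im * I.imK := by
    have := congrArg QuaternionAlgebra.imK h; rw [cJ3, cI3] at this; exact this
  have hsq : z.im^2 = w.im^2 := slice_eq_imsq hI hJ h
  have him : z.im = w.im ∨ z.im = -w.im := sq_eq_sq_iff_eq_or_eq_neg.1 hsq
  rcases him with him | him
  · left
    refine ⟨?_, Complex.ext hre him⟩
    ext
    · rw [hIre, hJre]
    · rw [him] at e1; exact mul_left_cancel₀ hw e1
    · rw [him] at e2; exact mul_left_cancel₀ hw e2
    · rw [him] at e3; exact mul_left_cancel₀ hw e3
  · right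
    refine ⟨?_, Complex.ext (by simpa using hre) (by simpa using him)⟩
    ext
    · simp [hIre, hJre]
    · show J.imI = -I.imI
      refine mul_left_cancel₀ hw ?_; rw [him] at e1; linear_combination -e1
    · show J.imJ = -I.imJ
      refine mul_left_cancel₀ hw ?_; rw [him] at e2; linear_combination -e2
    · show J.imK = -I.imK
      refine mul_left_cancel₀ hw ?_; rw [him] at e3; linear_combination -e3

lemma isOpen_slice_iff {s : Set Hq} :
    @IsOpen Hq sliceTopology s ↔ ∀ I ∈ SphereS, IsOpen (sliceEmb I ⁻¹' s) := by
  rw [show sliceTopology = ⨆ I ∈ SphereS, TopologicalSpace.coinduced (sliceEmb I) inferInstance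
      from rfl]
  simp only [isOpen_iSup_iff, isOpen_coinduced]

lemma continuous_sliceEmb {I : Hq} (hI : I ∈ SphereS) :
    @Continuous ℂ Hq _ sliceTopology (sliceEmb I) := by
  rw [continuous_iff_coinduced_le]
  exact le_iSup₂ (f := fun J (_ : J ∈ SphereS) =>
    TopologicalSpace.coinduced (sliceEmb J) inferInstance) I hI

/-- Reachability from `p` to the real point `x` within `U`, along a single slice. -/
def Reach (U : Set Hq) (x : ℝ) (p : Hq) : Prop :=
  ∃ I ∈ SphereS, ∃ z : ℂ, sliceEmb I z = p ∧ JoinedIn (sliceEmb I ⁻¹' U) z ((x : ℂ))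

section Main

variable {U : Set Hq} {x : ℝ}

/-- every real point of the (real-connected) domain is joined to x inside each slice. -/
lemma joined_real (hreal : IsPreconnected ((fun x : ℝ => (x : Hq)) ⁻¹' U))
    (hx : (x : Hq) ∈ U) {J : Hq} {y : ℝ} (hy : (y : Hq) ∈ U) :
    JoinedIn (sliceEmb J ⁻¹' U) ((y : ℂ)) ((x : ℂ)) := by
  have hseg : segment ℝ ((y:ℂ)) ((x:ℂ)) ⊆ sliceEmb J ⁻¹' U := by
    rintro ζ ⟨a, b, ha, hb, hab, rfl⟩
    have hmem : a * y + b * x ∈ (fun x : ℝ => (x : Hq)) ⁻¹' U := by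
      have : a • y + b • x ∈ segment ℝ y x := ⟨a, b, ha, hb, hab, rfl⟩
      rw [segment_eq_uIcc] at this
      exact hreal.ordConnected.uIcc_subset hy hx (by simpa [smul_eq_mul] using this)
    have hζ : a • (y:ℂ) + b • (x:ℂ) = ((a * y + b * x : ℝ) : ℂ) := by
      push_cast [Complex.real_smul]; ring
    rw [Set.mem_preimage, hζ, sliceEmb_real]
    exact hmem
  have hpc : IsPathConnected (segment ℝ ((y:ℂ)) ((x:ℂ))) :=
    (convex_segment _ _).isPathConnected ⟨_, left_mem_segment ℝ _ _⟩
  exact (hpc.joinedIn _ (left_mem_segment ℝ _ _) _ (right_mem_segment ℝ _ _)).mono hseg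

lemma slice_neg_preimage (J : Hq) :
    sliceEmb (-J) ⁻¹' U = (starRingEnd ℂ) ⁻¹' (sliceEmb J ⁻¹' U) := by
  ext ζ
  simp [Set.mem_preimage, sliceEmb_neg]

lemma joined_conj {J : Hq} {z : ℂ} (h : JoinedIn (sliceEmb (-J) ⁻¹' U) z ((x : ℂ))) :
    JoinedIn (sliceEmb J ⁻¹' U) ((starRingEnd ℂ) z) ((x : ℂ)) := by
  have := h.map (f := (starRingEnd ℂ)) Complex.continuous_conj
  rw [Complex.conj_ofReal] at this
  refine this.mono ?_
  rw [slice_neg_preimage]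
  rw [Set.image_preimage_eq _ (fun w => ⟨(starRingEnd ℂ) w, by simp⟩)]

end Main

lemma reach_mem {U : Set Hq} {x : ℝ} {p : Hq} (h : Reach U x p) : p ∈ U := by
  obtain ⟨I, hI, z, hz, hjoin⟩ := h
  have := hjoin.source_mem
  rw [Set.mem_preimage, hz] at this
  exact this

/-- In a real-connected slice-domain meeting ℝ, every point can be joined to every real
point of the domain by a slice preserving path. -/
theorem exists_slicePreserving_path_to_real (U : Set Hq)
    (hopen : @IsOpen Hq sliceTopology U)
    (hconn : @IsPreconnected Hq sliceTopology U)
    (hne : U.Nonempty)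
    (hreal : IsPreconnected ((fun x : ℝ => (x : Hq)) ⁻¹' U))
    (hRne : (U ∩ realLine).Nonempty)
    (q : Hq) (hq : q ∈ U) (x : ℝ) (hx : (x : Hq) ∈ U) :
    ∃ I ∈ SphereS, ∃ γ : ℝ → Hq,
      @ContinuousOn ℝ Hq _ sliceTopology γ (Set.Icc 0 1) ∧
      γ 0 = q ∧ γ 1 = (x : Hq) ∧
      ∀ t ∈ Set.Icc (0 : ℝ) 1, γ t ∈ U ∩ sliceC I := by
  classical
  set T : Set ℝ := (fun x : ℝ => (x : Hq)) ⁻¹' U with hT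
  have hUJ : ∀ J ∈ SphereS, IsOpen (sliceEmb J ⁻¹' U) := isOpen_slice_iff.1 hopen
  have hrealJ : ∀ (J : Hq) (y : ℝ), (y : Hq) ∈ U → (y : ℂ) ∈ sliceEmb J ⁻¹' U := by
    intro J y hy
    rw [Set.mem_preimage, sliceEmb_real]
    exact hy
  have hnropen : IsOpen {ζ : ℂ | ζ.im ≠ 0} :=
    isOpen_ne.preimage Complex.continuous_im
  -- the pieces
  set C : Hq → Set ℂ := fun J =>
    ⋃ y ∈ T, connectedComponentIn (sliceEmb J ⁻¹' U) ((y : ℂ)) with hC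
  set N : Hq → Set ℂ := fun J =>
    {z | z.im ≠ 0 ∧ JoinedIn (sliceEmb J ⁻¹' U) z ((x : ℂ))} with hN
  set M : Hq → Set ℂ := fun J =>
    {z | z.im ≠ 0 ∧ sliceEmb J z ∈ U ∧ ¬ Reach U x (sliceEmb J z)} with hM
  set V₁ : Set Hq := ⋃ J ∈ SphereS, sliceEmb J '' (C J ∪ N J) with hV₁
  set V₂ : Set Hq := ⋃ J ∈ SphereS, sliceEmb J '' (M J) with hV₂
  -- any point of C J ∪ N J is joined to x inside the J-slice
  have joinedOfE : ∀ J ∈ SphereS, ∀ w ∈ C J ∪ N J,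
      JoinedIn (sliceEmb J ⁻¹' U) w ((x : ℂ)) := by
    intro J hJ w hw
    rcases hw with hw | hw
    · obtain ⟨y, hyT, hyc⟩ := Set.mem_iUnion₂.1 hw
      have hyU : (y : Hq) ∈ U := hyT
      have hyUJ : (y : ℂ) ∈ sliceEmb J ⁻¹' U := hrealJ J y hyU
      have hcomp_open : IsOpen (connectedComponentIn (sliceEmb J ⁻¹' U) ((y : ℂ))) :=
        (hUJ J hJ).connectedComponentIn
      have hcomp_conn : IsConnected (connectedComponentIn (sliceEmb J ⁻¹' U) ((y : ℂ))) :=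
        isConnected_connectedComponentIn_iff.2 hyUJ
      have hpc : IsPathConnected (connectedComponentIn (sliceEmb J ⁻¹' U) ((y : ℂ))) :=
        (hcomp_open.isConnected_iff_isPathConnected).1 hcomp_conn
      have h1 : JoinedIn (sliceEmb J ⁻¹' U) w ((y : ℂ)) :=
        (hpc.joinedIn _ hyc _ (mem_connectedComponentIn hyUJ)).mono
          (connectedComponentIn_subset _ _)
      exact h1.trans (joined_real hreal hx hyU)
    · exact hw.2
  have reachV1 : ∀ p ∈ V₁, Reach U x p := by
    intro p hp
    obtain ⟨J, hJ, hpJ⟩ := Set.mem_iUnion₂.1 hp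
    obtain ⟨w, hw, hwp⟩ := hpJ
    exact ⟨J, hJ, w, hwp, joinedOfE J hJ w hw⟩
  have RsubV1 : ∀ p, Reach U x p → p ∈ V₁ := by
    intro p hp
    obtain ⟨I, hI, z, hz, hjoin⟩ := hp
    by_cases hzim : z.im = 0
    · have hzre : ((z.re : ℝ) : ℂ) = z := Complex.ext rfl (by simp [hzim])
      have hzT : z.re ∈ T := by
        show ((z.re : ℝ) : Hq) ∈ U
        rw [← sliceEmb_real I, hzre, hz]
        exact reach_mem ⟨I, hI, z, hz, hjoin⟩
      refine Set.mem_iUnion₂.2 ⟨I, hI, z, Or.inl ?_, hz⟩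
      refine Set.mem_iUnion₂.2 ⟨z.re, hzT, ?_⟩
      rw [hzre]
      exact mem_connectedComponentIn hjoin.source_mem
    · exact Set.mem_iUnion₂.2 ⟨I, hI, z, Or.inr ⟨hzim, hjoin⟩, hz⟩
  have V2sub : ∀ p ∈ V₂, p ∈ U ∧ ¬ Reach U x p := by
    intro p hp
    obtain ⟨J, hJ, hpJ⟩ := Set.mem_iUnion₂.1 hp
    obtain ⟨w, hw, hwp⟩ := hpJ
    rw [← hwp]
    exact ⟨hw.2.1, hw.2.2⟩
  have UnotRsubV2 : ∀ p ∈ U, ¬ Reach U x p → p ∈ V₂ := by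
    intro p hpU hpR
    obtain ⟨J, hJ, w, hw⟩ := exists_slice p
    by_cases hwim : w.im = 0
    · exfalso
      apply hpR
      have hwre : ((w.re : ℝ) : ℂ) = w := Complex.ext rfl (by simp [hwim])
      have hwU : ((w.re : ℝ) : Hq) ∈ U := by rw [← sliceEmb_real J, hwre, hw]; exact hpU
      exact ⟨J, hJ, w, hw, by rw [← hwre]; exact joined_real hreal hx hwU⟩
    · exact Set.mem_iUnion₂.2 ⟨J, hJ, w, ⟨hwim, by rw [hw]; exact hpU, by rw [hw]; exact hpR⟩, hw⟩
  -- key: reachability of a nonreal point can be realized in any slice containing it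
  have key : ∀ K ∈ SphereS, ∀ ζ : ℂ, ζ.im ≠ 0 → Reach U x (sliceEmb K ζ) →
      JoinedIn (sliceEmb K ⁻¹' U) ζ ((x : ℂ)) := by
    intro K hK ζ hζim hp
    obtain ⟨I, hI, ν, hν, hjoin⟩ := hp
    rcases slice_eq_classify hK hI hν hζim with ⟨hIK, hνz⟩ | ⟨hIK, hνz⟩
    · rw [hIK, hνz] at hjoin
      exact hjoin
    · rw [hIK, hνz] at hjoin
      have := joined_conj (U := U) (x := x) (J := K) hjoin
      rwa [Complex.conj_conj] at this
  -- V₁ is slice-open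
  have hV1open : @IsOpen Hq sliceTopology V₁ := by
    rw [isOpen_slice_iff]
    intro K hK
    rw [isOpen_iff_forall_mem_open]
    intro z hz
    have hpR : Reach U x (sliceEmb K z) := reachV1 _ hz
    have hpU : sliceEmb K z ∈ U := reach_mem hpR
    by_cases hzim : z.im = 0
    · have hzre : ((z.re : ℝ) : ℂ) = z := Complex.ext rfl (by simp [hzim])
      have hzT : z.re ∈ T := by
        show ((z.re : ℝ) : Hq) ∈ U
        rw [← sliceEmb_real K, hzre]
        exact hpU
      refine ⟨connectedComponentIn (sliceEmb K ⁻¹' U) z, ?_,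
        (hUJ K hK).connectedComponentIn, mem_connectedComponentIn hpU⟩
      intro ζ hζ
      refine Set.mem_iUnion₂.2 ⟨K, hK, ζ, Or.inl ?_, rfl⟩
      exact Set.mem_iUnion₂.2 ⟨z.re, hzT, by rw [hzre]; exact hζ⟩
    · have hjz : JoinedIn (sliceEmb K ⁻¹' U) z ((x : ℂ)) := key K hK z hzim hpR
      have hOopen : IsOpen ((sliceEmb K ⁻¹' U) ∩ {ζ : ℂ | ζ.im ≠ 0}) :=
        (hUJ K hK).inter hnropen
      have hzO : z ∈ (sliceEmb K ⁻¹' U) ∩ {ζ : ℂ | ζ.im ≠ 0} := ⟨hpU, hzim⟩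
      refine ⟨connectedComponentIn ((sliceEmb K ⁻¹' U) ∩ {ζ : ℂ | ζ.im ≠ 0}) z, ?_,
        hOopen.connectedComponentIn, mem_connectedComponentIn hzO⟩
      intro ζ hζ
      have hsub := connectedComponentIn_subset
        ((sliceEmb K ⁻¹' U) ∩ {ζ : ℂ | ζ.im ≠ 0}) z
      have hζ2 := hsub hζ
      have hpc : IsPathConnected
          (connectedComponentIn ((sliceEmb K ⁻¹' U) ∩ {ζ : ℂ | ζ.im ≠ 0}) z) :=
        (hOopen.connectedComponentIn.isConnected_iff_isPathConnected).1
          (isConnected_connectedComponentIn_iff.2 hzO)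
      have hjoinζz : JoinedIn (sliceEmb K ⁻¹' U) ζ z :=
        (hpc.joinedIn _ hζ _ (mem_connectedComponentIn hzO)).mono
          (hsub.trans Set.inter_subset_left)
      refine Set.mem_iUnion₂.2 ⟨K, hK, ζ, Or.inr ⟨hζ2.2, hjoinζz.trans hjz⟩, rfl⟩
  -- V₂ is slice-open
  have hV2open : @IsOpen Hq sliceTopology V₂ := by
    rw [isOpen_slice_iff]
    intro K hK
    rw [isOpen_iff_forall_mem_open]
    intro z hz
    obtain ⟨J, hJ, hzJ⟩ := Set.mem_iUnion₂.1 hz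
    obtain ⟨w, hw, hwz⟩ := hzJ
    have hzim : z.im ≠ 0 := by
      have hsq := slice_eq_imsq hK hJ hwz
      intro h0
      rw [h0] at hsq
      exact hw.1 ((pow_eq_zero_iff (by norm_num : (2:ℕ) ≠ 0)).mp (by simpa using hsq))
    have hpU : sliceEmb K z ∈ U := by rw [← hwz]; exact hw.2.1
    have hpR : ¬ Reach U x (sliceEmb K z) := by rw [← hwz]; exact hw.2.2
    have hOopen : IsOpen ((sliceEmb K ⁻¹' U) ∩ {ζ : ℂ | ζ.im ≠ 0}) :=
      (hUJ K hK).inter hnropen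
    have hzO : z ∈ (sliceEmb K ⁻¹' U) ∩ {ζ : ℂ | ζ.im ≠ 0} := ⟨hpU, hzim⟩
    refine ⟨connectedComponentIn ((sliceEmb K ⁻¹' U) ∩ {ζ : ℂ | ζ.im ≠ 0}) z, ?_,
      hOopen.connectedComponentIn, mem_connectedComponentIn hzO⟩
    intro ζ hζ
    have hsub := connectedComponentIn_subset
      ((sliceEmb K ⁻¹' U) ∩ {ζ : ℂ | ζ.im ≠ 0}) z
    have hζ2 := hsub hζ
    have hpc : IsPathConnected
        (connectedComponentIn ((sliceEmb K ⁻¹' U) ∩ {ζ : ℂ | ζ.im ≠ 0}) z) :=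
      (hOopen.connectedComponentIn.isConnected_iff_isPathConnected).1
        (isConnected_connectedComponentIn_iff.2 hzO)
    have hjoinzζ : JoinedIn (sliceEmb K ⁻¹' U) z ζ :=
      (hpc.joinedIn _ (mem_connectedComponentIn hzO) _ hζ).mono
        (hsub.trans Set.inter_subset_left)
    have hζnR : ¬ Reach U x (sliceEmb K ζ) := by
      intro hre
      have hjζx := key K hK ζ hζ2.2 hre
      exact hpR ⟨K, hK, z, rfl, hjoinzζ.trans hjζx⟩
    exact Set.mem_iUnion₂.2 ⟨K, hK, ζ, ⟨hζ2.2, hζ2.1, hζnR⟩, rfl⟩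
  -- x is reachable
  have hxR : Reach U x ((x : Hq)) :=
    ⟨iu, iu_mem, (x : ℂ), sliceEmb_real iu x, JoinedIn.refl (hrealJ iu x hx)⟩
  -- the preconnectedness argument
  have hqR : Reach U x q := by
    by_contra hqnR
    have hcover : U ⊆ V₁ ∪ V₂ := by
      intro p hp
      by_cases hpR : Reach U x p
      · exact Or.inl (RsubV1 p hpR)
      · exact Or.inr (UnotRsubV2 p hp hpR)
    obtain ⟨p, hpU, hp1, hp2⟩ := hconn V₁ V₂ hV1open hV2open hcover
      ⟨(x : Hq), hx, RsubV1 _ hxR⟩ ⟨q, hq, UnotRsubV2 q hq hqnR⟩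
    exact (V2sub p hp2).2 (reachV1 p hp1)
  -- extract the path
  obtain ⟨I, hI, z, hz, hjoin⟩ := hqR
  refine ⟨I, hI, fun t => sliceEmb I ((hjoin.somePath).extend t), ?_, ?_, ?_, ?_⟩
  · have hcont : @Continuous ℝ Hq _ sliceTopology
        (fun t => sliceEmb I ((hjoin.somePath).extend t)) :=
      @Continuous.comp ℝ ℂ Hq _ _ sliceTopology _ _
        (continuous_sliceEmb hI) (Path.continuous_extend _)
    exact @Continuous.continuousOn ℝ Hq _ sliceTopology _ _ hcont
  · show sliceEmb I ((hjoin.somePath).extend 0) = q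
    rw [Path.extend_zero, hz]
  · show sliceEmb I ((hjoin.somePath).extend 1) = ((x:ℝ) : Hq)
    rw [Path.extend_one, sliceEmb_real]
  · intro t ht
    show sliceEmb I ((hjoin.somePath).extend t) ∈ U ∩ sliceC I
    rw [Path.extend_apply _ ht]
    exact ⟨hjoin.somePath_mem _, ⟨_, rfl⟩⟩
end
end

section
/- (Splitting Lemma for slice-open sets) Let Ω ⊆ ℍ be slice-open and f : Ω → ℍ. Then f is slice regular if and only if for all I, J ∈ 𝕊 with I ⊥ J there exist functions F, G : Ω ∩ ℂ_I → ℂ_I, holomorphic with respect to the complex structure of ℂ_I, such that f(z) = F(z) + G(z)J for all z ∈ Ω ∩ ℂ_I. -/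
noncomputable section

open Quaternion Topology

/-! ### Auxiliary lemmas -/

lemma mem_sphere_iff {I : Hq} :
    I ∈ SphereS ↔ I.re = 0 ∧ I.imI ^ 2 + I.imJ ^ 2 + I.imK ^ 2 = 1 := by
  constructor
  · intro hI
    have h : I * I = -1 := by rw [← sq]; exact hI
    have h1 := congrArg QuaternionAlgebra.re h
    have h2 := congrArg QuaternionAlgebra.imI h
    have h3 := congrArg QuaternionAlgebra.imJ h
    have h4 := congrArg QuaternionAlgebra.imK h
    simp [Quaternion.re_mul, Quaternion.imI_mul, Quaternion.imJ_mul, Quaternion.imK_mul]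
      at h1 h2 h3 h4
    have h0 : I.re = 0 := by
      nlinarith [sq_nonneg I.re, sq_nonneg I.imI, sq_nonneg I.imJ, sq_nonneg I.imK]
    exact ⟨h0, by nlinarith⟩
  · rintro ⟨h0, hn⟩
    show I ^ 2 = -1
    rw [sq]
    apply Quaternion.ext <;>
      simp [Quaternion.re_mul, Quaternion.imI_mul, Quaternion.imJ_mul, Quaternion.imK_mul, h0] <;>
      nlinarith

lemma sphere_re {I : Hq} (hI : I ∈ SphereS) : I.re = 0 := (mem_sphere_iff.mp hI).1

lemma sphere_norm {I : Hq} (hI : I ∈ SphereS) :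
    I.imI ^ 2 + I.imJ ^ 2 + I.imK ^ 2 = 1 := (mem_sphere_iff.mp hI).2

lemma sphere_mul_self {I : Hq} (hI : I ∈ SphereS) : I * I = -1 := by rw [← sq]; exact hI

lemma re_mul_comm (a b : Hq) : (a * b).re = (b * a).re := by
  simp [Quaternion.re_mul]; ring

/-- projection of a quaternion in `ℂ_I` back to `ℂ`. -/
def piI (I q : Hq) : ℂ := ⟨q.re, -((q * I).re)⟩

lemma sliceEmb_re (I : Hq) (z : ℂ) : (sliceEmb I z).re = z.re + z.im * I.re := by
  simp [sliceEmb, Quaternion.re_mul]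
lemma sliceEmb_imI (I : Hq) (z : ℂ) : (sliceEmb I z).imI = z.im * I.imI := by
  simp [sliceEmb, Quaternion.imI_mul]
lemma sliceEmb_imJ (I : Hq) (z : ℂ) : (sliceEmb I z).imJ = z.im * I.imJ := by
  simp [sliceEmb, Quaternion.imJ_mul]
lemma sliceEmb_imK (I : Hq) (z : ℂ) : (sliceEmb I z).imK = z.im * I.imK := by
  simp [sliceEmb, Quaternion.imK_mul]

/-- if `p` commutes with `I ∈ 𝕊` then `p ∈ ℂ_I` and the projection recovers it. -/
lemma mem_slice_of_commute {I p : Hq} (hI : I ∈ SphereS) (h : I * p = p * I) :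
    sliceEmb I (piI I p) = p := by
  have h0 := sphere_re hI
  have hn := sphere_norm hI
  have h2 := congrArg QuaternionAlgebra.imI h
  have h3 := congrArg QuaternionAlgebra.imJ h
  have h4 := congrArg QuaternionAlgebra.imK h
  simp [Quaternion.imI_mul, Quaternion.imJ_mul, Quaternion.imK_mul, h0] at h2 h3 h4
  have c12 : I.imI * p.imJ = I.imJ * p.imI := by linarith
  have c13 : I.imI * p.imK = I.imK * p.imI := by linarith
  have c23 : I.imJ * p.imK = I.imK * p.imJ := by linarith
  apply Quaternion.ext <;>
    simp [sliceEmb_re, sliceEmb_imI, sliceEmb_imJ, sliceEmb_imK, piI, Quaternion.re_mul, h0]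
  · linear_combination p.imI * hn + I.imJ * c12 + I.imK * c13
  · linear_combination p.imJ * hn - I.imI * c12 + I.imK * c23
  · linear_combination p.imK * hn - I.imI * c13 - I.imJ * c23

lemma anticommute_of_orth {I J : Hq} (hI : I ∈ SphereS) (hJ : J ∈ SphereS)
    (h : QOrth I J) : J * I = -(I * J) := by
  have hI0 := sphere_re hI
  have hJ0 := sphere_re hJ
  have hd : I.imI * J.imI + I.imJ * J.imJ + I.imK * J.imK = 0 := by
    unfold QOrth at h
    simp [Quaternion.re_mul, hI0, hJ0] at h
    linarith
  apply Quaternion.ext <;>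
    simp [Quaternion.re_mul, Quaternion.imI_mul, Quaternion.imJ_mul, Quaternion.imK_mul,
      hI0, hJ0] <;> linarith

lemma piI_smul_I {I : Hq} (hI : I ∈ SphereS) (p : Hq) :
    piI I (I * p) = Complex.I * piI I p := by
  have h2 : I * I = -1 := sphere_mul_self hI
  have e1 : (I * p).re = (p * I).re := re_mul_comm I p
  have e2 : (I * p * I).re = -p.re := by
    rw [mul_assoc, re_mul_comm, mul_assoc, h2, mul_neg_one, Quaternion.re_neg]
  apply Complex.ext
  · simp only [piI, Complex.mul_re, Complex.I_re, Complex.I_im]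
    rw [e1]; ring
  · simp only [piI, Complex.mul_im, Complex.I_re, Complex.I_im, e2]
    ring

lemma sliceEmb_add (I : Hq) (z w : ℂ) : sliceEmb I (z + w) = sliceEmb I z + sliceEmb I w := by
  simp only [sliceEmb, Complex.add_re, Complex.add_im]
  push_cast
  noncomm_ring

lemma sliceEmb_smul (I : Hq) (r : ℝ) (z : ℂ) : sliceEmb I (r • z) = r • sliceEmb I z := by
  simp only [sliceEmb, Complex.smul_re, Complex.smul_im, smul_add, smul_eq_mul]
  push_cast
  rw [mul_assoc, Quaternion.coe_mul_eq_smul, Quaternion.coe_mul_eq_smul]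

lemma sliceEmb_I_mul {I : Hq} (hI : I ∈ SphereS) (z : ℂ) :
    sliceEmb I (Complex.I * z) = I * sliceEmb I z := by
  have h2 : I * I = -1 := sphere_mul_self hI
  simp only [sliceEmb, Complex.I_mul_re, Complex.I_mul_im, mul_add]
  rw [show I * ((z.im : Hq) * I) = (z.im : Hq) * (I * I) by
    rw [← mul_assoc, ← Quaternion.coe_commutes, mul_assoc], h2]
  rw [show I * (z.re : Hq) = (z.re : Hq) * I from (Quaternion.coe_commutes z.re I).symm]
  push_cast
  noncomm_ring

/-! ### Continuous linear maps -/

def piCLM (I : Hq) : Hq →L[ℝ] ℂ :=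
  LinearMap.toContinuousLinearMap
    { toFun := fun q => piI I q
      map_add' := by intro a b; apply Complex.ext <;> simp [piI, add_mul] <;> ring
      map_smul' := by intro r a; apply Complex.ext <;>
        simp [piI, smul_mul_assoc, Complex.real_smul] <;> ring }

@[simp] lemma piCLM_apply (I q : Hq) : piCLM I q = piI I q := rfl

def mulLeftCLM (a : Hq) : Hq →L[ℝ] Hq :=
  LinearMap.toContinuousLinearMap (LinearMap.mulLeft ℝ a)
def mulRightCLM (a : Hq) : Hq →L[ℝ] Hq :=
  LinearMap.toContinuousLinearMap (LinearMap.mulRight ℝ a)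
@[simp] lemma mulLeftCLM_apply (a q : Hq) : mulLeftCLM a q = a * q := rfl
@[simp] lemma mulRightCLM_apply (a q : Hq) : mulRightCLM a q = q * a := rfl

def eCLM (I : Hq) : ℂ →L[ℝ] Hq :=
  LinearMap.toContinuousLinearMap
    { toFun := sliceEmb I
      map_add' := sliceEmb_add I
      map_smul' := sliceEmb_smul I }

@[simp] lemma eCLM_apply (I : Hq) (z : ℂ) : eCLM I z = sliceEmb I z := rfl

def tCLM (I : Hq) : Hq →L[ℝ] Hq :=
  (1/2 : ℝ) • (ContinuousLinearMap.id ℝ Hq - (mulRightCLM I).comp (mulLeftCLM I))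
def sCLM (I J : Hq) : Hq →L[ℝ] Hq :=
  -((mulRightCLM J).comp ((1/2 : ℝ) •
      (ContinuousLinearMap.id ℝ Hq + (mulRightCLM I).comp (mulLeftCLM I))))

lemma tCLM_apply (I q : Hq) : tCLM I q = (1/2 : ℝ) • (q - I * q * I) := by
  simp [tCLM, mul_assoc]
lemma sCLM_apply (I J q : Hq) : sCLM I J q = -(((1/2 : ℝ) • (q + I * q * I)) * J) := by
  simp [sCLM, add_mul, smul_mul_assoc, mul_assoc, smul_add, neg_add]

lemma commute_T {I : Hq} (hI : I ∈ SphereS) (q : Hq) :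
    I * tCLM I q = tCLM I q * I := by
  have h2 : I * I = -1 := sphere_mul_self hI
  rw [tCLM_apply, mul_smul_comm, smul_mul_assoc]
  congr 1
  have l1 : I * (q - I * q * I) = I * q + q * I := by
    rw [mul_sub, ← mul_assoc, ← mul_assoc, h2]; noncomm_ring
  have l2 : (q - I * q * I) * I = q * I + I * q := by
    rw [sub_mul, mul_assoc, mul_assoc, h2]; noncomm_ring
  rw [l1, l2]; abel

lemma commute_S {I J : Hq} (hI : I ∈ SphereS) (hanti : J * I = -(I * J)) (q : Hq) :
    I * sCLM I J q = sCLM I J q * I := by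
  have h2 : I * I = -1 := sphere_mul_self hI
  rw [sCLM_apply, smul_mul_assoc, mul_neg, neg_mul, mul_smul_comm, smul_mul_assoc]
  congr 1
  have l1 : I * ((q + I * q * I) * J) = (I * q - q * I) * J := by
    rw [← mul_assoc, mul_add, ← mul_assoc, ← mul_assoc, h2]; noncomm_ring
  have l2 : (q + I * q * I) * J * I = (I * q - q * I) * J := by
    rw [mul_assoc, hanti, mul_neg, ← mul_assoc]
    have : (q + I * q * I) * I = -(I * q - q * I) := by
      rw [add_mul, mul_assoc, mul_assoc, h2]; noncomm_ring
    rw [this]; noncomm_ring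
  rw [l1, l2]

lemma tCLM_mulI (I w : Hq) : tCLM I (I * w) = I * tCLM I w := by
  rw [tCLM_apply, tCLM_apply, mul_smul_comm]
  congr 1
  noncomm_ring

lemma sCLM_mulI (I J w : Hq) : sCLM I J (I * w) = I * sCLM I J w := by
  rw [sCLM_apply, sCLM_apply, mul_neg]
  congr 1
  rw [← mul_assoc I ((1/2 : ℝ) • (w + I * w * I)) J, mul_smul_comm]
  congr 2
  noncomm_ring

lemma exists_orth {I : Hq} (hI : I ∈ SphereS) : ∃ J, J ∈ SphereS ∧ QOrth I J := by
  obtain ⟨h0, hn⟩ := mem_sphere_iff.mp hI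
  by_cases hc : I.imJ ^ 2 + I.imK ^ 2 = 0
  · refine ⟨⟨0, 0, 1, 0⟩, mem_sphere_iff.mpr (by norm_num), ?_⟩
    have hJ : I.imJ = 0 := by nlinarith [sq_nonneg I.imJ, sq_nonneg I.imK]
    unfold QOrth
    simp [Quaternion.re_mul, hJ, h0]
    erw [Quaternion.imI_star, Quaternion.imK_star]
    simp
  · set s : ℝ := Real.sqrt (I.imJ ^ 2 + I.imK ^ 2) with hs
    have hpos : 0 < I.imJ ^ 2 + I.imK ^ 2 :=
      lt_of_le_of_ne (by positivity) (Ne.symm hc)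
    have hssq : s ^ 2 = I.imJ ^ 2 + I.imK ^ 2 := Real.sq_sqrt hpos.le
    have hsne : s ≠ 0 := by positivity
    refine ⟨⟨0, 0, -I.imK / s, I.imJ / s⟩, mem_sphere_iff.mpr ⟨rfl, ?_⟩, ?_⟩
    · field_simp
      linarith [hssq]
    · unfold QOrth
      simp [Quaternion.re_mul, h0]
      erw [Quaternion.imI_star, Quaternion.imJ_star, Quaternion.imK_star]
      field_simp
      ring

lemma preimage_open {Ω : Set Hq} (hΩ : @IsOpen Hq sliceTopology Ω) {I : Hq}
    (hI : I ∈ SphereS) : IsOpen (sliceEmb I ⁻¹' Ω) := by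
  have h1 : IsOpen[⨆ J ∈ SphereS, TopologicalSpace.coinduced (sliceEmb J) inferInstance] Ω := hΩ
  rw [isOpen_iSup_iff] at h1
  have h2 := h1 I
  rw [isOpen_iSup_iff] at h2
  exact isOpen_coinduced.mp (h2 hI)

lemma clm_complex_eq {M : ℂ →L[ℝ] ℂ} (h : M Complex.I = Complex.I * M 1) :
    (((1 : ℂ →L[ℂ] ℂ).smulRight (M 1)).restrictScalars ℝ) = M := by
  ext z
  simp only [ContinuousLinearMap.coe_restrictScalars', Function.comp_apply,
    ContinuousLinearMap.smulRight_apply, ContinuousLinearMap.one_apply]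
  conv_rhs => rw [← Complex.re_add_im z]
  have : (z.re : ℂ) + (z.im : ℂ) * Complex.I = z.re • (1 : ℂ) + z.im • Complex.I := by
    simp [Complex.real_smul]
  rw [this, map_add, map_smul, map_smul, h]
  simp only [Complex.real_smul, smul_eq_mul]
  linear_combination (M 1) * (Complex.re_add_im z).symm

/-- From the slice Cauchy–Riemann equation, `L i = I · L 1`. -/
lemma cr_eq {I : Hq} (hI : I ∈ SphereS) {L : ℂ →L[ℝ] Hq}
    (hCR : L 1 + I * L Complex.I = 0) : L Complex.I = I * L 1 := by
  have h2 : I * I = -1 := sphere_mul_self hI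
  have h' : I * L Complex.I = -(L 1) := eq_neg_of_add_eq_zero_right hCR
  have h'' := congrArg (I * ·) h'
  rw [← mul_assoc, h2, neg_one_mul, mul_neg] at h''
  exact neg_injective h''

/-- Splitting Lemma: `f` is slice regular on the slice-open set `Ω` iff for all
orthogonal `I, J ∈ 𝕊` the restriction of `f` to `Ω ∩ ℂ_I` splits as `F + G·J` with
`F, G` holomorphic `ℂ_I`-valued functions. -/
theorem splitting_lemma (Ω : Set Hq) (hΩ : @IsOpen Hq sliceTopology Ω) (f : Hq → Hq) :
    SliceRegular f Ω ↔
      ∀ I ∈ SphereS, ∀ J ∈ SphereS, QOrth I J →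
        ∃ F G : ℂ → ℂ,
          DifferentiableOn ℂ F (sliceEmb I ⁻¹' Ω) ∧
          DifferentiableOn ℂ G (sliceEmb I ⁻¹' Ω) ∧
          ∀ z ∈ sliceEmb I ⁻¹' Ω,
            f (sliceEmb I z) = sliceEmb I (F z) + sliceEmb I (G z) * J := by
  constructor
  · intro hreg I hI J hJ hIJ
    have hI2 := sphere_mul_self hI
    have hJ2 := sphere_mul_self hJ
    have hanti := anticommute_of_orth hI hJ hIJ
    refine ⟨fun w => piI I (tCLM I (f (sliceEmb I w))),
            fun w => piI I (sCLM I J (f (sliceEmb I w))), ?_, ?_, ?_⟩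
    · intro z hz
      obtain ⟨L, hL, hCR⟩ := hreg I hI z hz
      have hLi : L Complex.I = I * L 1 := cr_eq hI hCR
      set M := ((piCLM I).comp (tCLM I)).comp L with hMdef
      have heq : (fun w => piI I (tCLM I (f (sliceEmb I w))))
          = ⇑((piCLM I).comp (tCLM I)) ∘ (f ∘ sliceEmb I) := by
        funext w
        simp [Function.comp]
      have hM : HasFDerivAt (fun w => piI I (tCLM I (f (sliceEmb I w)))) M z := by
        rw [heq]
        exact ((piCLM I).comp (tCLM I)).hasFDerivAt.comp z hL
      have hMi : M Complex.I = Complex.I * M 1 := by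
        simp only [hMdef, ContinuousLinearMap.comp_apply, piCLM_apply]
        rw [hLi, tCLM_mulI, piI_smul_I hI]
      exact (hasFDerivAt_of_restrictScalars ℝ hM (clm_complex_eq hMi)).differentiableAt.differentiableWithinAt
    · intro z hz
      obtain ⟨L, hL, hCR⟩ := hreg I hI z hz
      have hLi : L Complex.I = I * L 1 := cr_eq hI hCR
      set M := ((piCLM I).comp (sCLM I J)).comp L with hMdef
      have heq : (fun w => piI I (sCLM I J (f (sliceEmb I w))))
          = ⇑((piCLM I).comp (sCLM I J)) ∘ (f ∘ sliceEmb I) := by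
        funext w
        simp [Function.comp]
      have hM : HasFDerivAt (fun w => piI I (sCLM I J (f (sliceEmb I w)))) M z := by
        rw [heq]
        exact ((piCLM I).comp (sCLM I J)).hasFDerivAt.comp z hL
      have hMi : M Complex.I = Complex.I * M 1 := by
        simp only [hMdef, ContinuousLinearMap.comp_apply, piCLM_apply]
        rw [hLi, sCLM_mulI, piI_smul_I hI]
      exact (hasFDerivAt_of_restrictScalars ℝ hM (clm_complex_eq hMi)).differentiableAt.differentiableWithinAt
    · intro z hz
      set p := f (sliceEmb I z) with hp
      have e1 : sliceEmb I (piI I (tCLM I p)) = tCLM I p :=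
        mem_slice_of_commute hI (commute_T hI p)
      have e2 : sliceEmb I (piI I (sCLM I J p)) = sCLM I J p :=
        mem_slice_of_commute hI (commute_S hI hanti p)
      show p = sliceEmb I (piI I (tCLM I p)) + sliceEmb I (piI I (sCLM I J p)) * J
      rw [e1, e2, tCLM_apply, sCLM_apply, neg_mul, mul_assoc _ J J, hJ2, mul_neg_one, neg_neg]
      module
  · intro H I hI
    obtain ⟨J, hJ, hIJ⟩ := exists_orth hI
    have hI2 := sphere_mul_self hI
    obtain ⟨F, G, hF, hG, hfg⟩ := H I hI J hJ hIJ
    have hU : IsOpen (sliceEmb I ⁻¹' Ω) := preimage_open hΩ hI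
    intro z hz
    have hFz : HasFDerivAt F (fderiv ℂ F z) z :=
      ((hF z hz).differentiableAt (hU.mem_nhds hz)).hasFDerivAt
    have hGz : HasFDerivAt G (fderiv ℂ G z) z :=
      ((hG z hz).differentiableAt (hU.mem_nhds hz)).hasFDerivAt
    set L : ℂ →L[ℝ] Hq := (eCLM I).comp ((fderiv ℂ F z).restrictScalars ℝ) +
        ((mulRightCLM J).comp (eCLM I)).comp ((fderiv ℂ G z).restrictScalars ℝ) with hLdef
    refine ⟨L, ?_, ?_⟩
    · have h1 : HasFDerivAt (fun w => sliceEmb I (F w) + sliceEmb I (G w) * J) L z := by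
        apply HasFDerivAt.add
        · exact (eCLM I).hasFDerivAt.comp z (hFz.restrictScalars ℝ)
        · exact ((mulRightCLM J).comp (eCLM I)).hasFDerivAt.comp z (hGz.restrictScalars ℝ)
      have heq : (f ∘ sliceEmb I) =ᶠ[𝓝 z] (fun w => sliceEmb I (F w) + sliceEmb I (G w) * J) := by
        filter_upwards [hU.mem_nhds hz] with w hw
        exact hfg w hw
      exact (heq.hasFDerivAt_iff).mpr h1
    · have kF : fderiv ℂ F z Complex.I = Complex.I * (fderiv ℂ F z 1) := by
        have := (fderiv ℂ F z).map_smul Complex.I (1 : ℂ)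
        simpa [smul_eq_mul] using this
      have kG : fderiv ℂ G z Complex.I = Complex.I * (fderiv ℂ G z 1) := by
        have := (fderiv ℂ G z).map_smul Complex.I (1 : ℂ)
        simpa [smul_eq_mul] using this
      simp only [hLdef, ContinuousLinearMap.add_apply, ContinuousLinearMap.comp_apply,
        ContinuousLinearMap.coe_restrictScalars', eCLM_apply, mulRightCLM_apply]
      rw [kF, kG, sliceEmb_I_mul hI, sliceEmb_I_mul hI]
      have key : ∀ a b : Hq, a + b * J + I * (I * a + I * b * J)
          = (I * I + 1) * a + ((I * I + 1) * b) * J := by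
        intro a b; noncomm_ring
      rw [key, hI2]
      simp
end
end
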